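/- Let A, B be n × n complex matrices and λ₀ ∈ ℂ. The following statements are equivalent: (b) rank(A − λ₀B) < nrank(A − λB); (c) dim GKer(A − λ₀B) < dim ker(A − λ₀B); (d) there exists a vector v with (A − λ₀B)v = 0 and v ∉ GKer(A − λ₀B); (e) there exists a vector v with (A − λ₀B)v = 0 and v ∉ R(A,B). -/

import Mathlib

open Matrix

noncomputable section

/-- The generic kernel `GKer(A − ξB)`: the space of values at `ξ` of polynomial
vectors annihilated by the pencil `A − λB` identically in `λ`. -/
def GKer {N : Type*} [Fintype N] (A B : Matrix N N ℂ) (ξ : ℂ) :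
    Submodule ℂ (N → ℂ) :=
  Submodule.span ℂ {v | ∃ p : N → Polynomial ℂ,
    (∀ t : ℂ, (A - t • B).mulVec (fun i => (p i).eval t) = 0) ∧
    v = fun i => (p i).eval ξ}

/-- Minimal reducing subspace `R(A,B)`. -/
def RedMin {N : Type*} [Fintype N] (A B : Matrix N N ℂ) : Submodule ℂ (N → ℂ) :=
  Submodule.span ℂ (⋃ ξ : ℂ, (GKer A B ξ : Set (N → ℂ)))

/-- Normal rank of the pencil `A − λB`. -/
def nrank {N : Type*} [Fintype N] (A B : Matrix N N ℂ) : ℕ :=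
  ⨆ ξ : ℂ, (A - ξ • B).rank

set_option maxHeartbeats 1600000
set_option synthInstance.maxHeartbeats 1000000

open Polynomial

namespace PencilAux
variable {n : ℕ} (A B : Matrix (Fin n) (Fin n) ℂ)

/-- The pencil as a matrix over `ℂ[X]`. -/
def pP : Matrix (Fin n) (Fin n) (Polynomial ℂ) :=
  Matrix.of fun i j => C (A i j) - X * C (B i j)

lemma pP_apply (i j : Fin n) : pP A B i j = C (A i j) - X * C (B i j) := by
  rfl

lemma eval_pP_mulVec (p : Fin n → Polynomial ℂ) (t : ℂ) (i : Fin n) :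
    ((pP A B).mulVec p i).eval t = (A - t • B).mulVec (fun j => (p j).eval t) i := by
  simp only [Matrix.mulVec, dotProduct, pP_apply, eval_finset_sum, Matrix.sub_apply,
    Matrix.smul_apply, smul_eq_mul, eval_mul, eval_sub, eval_C, eval_X, sub_mul]

lemma sol_iff (p : Fin n → Polynomial ℂ) :
    (∀ t : ℂ, (A - t • B).mulVec (fun i => (p i).eval t) = 0) ↔ (pP A B).mulVec p = 0 := by
  constructor
  · intro h
    funext i
    apply Polynomial.zero_of_eval_zero
    intro t
    rw [eval_pP_mulVec, h t]
    rfl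
  · intro h t
    funext i
    have := eval_pP_mulVec A B p t i
    rw [h] at this
    simpa using this.symm

/-- Evaluation of a polynomial vector, as a `ℂ`-linear map. -/
def evL (ξ : ℂ) : (Fin n → Polynomial ℂ) →ₗ[ℂ] (Fin n → ℂ) where
  toFun q := fun i => (q i).eval ξ
  map_add' q r := by funext i; simp
  map_smul' c q := by funext i; simp [Polynomial.smul_eq_C_mul]

lemma evL_apply (ξ : ℂ) (q : Fin n → Polynomial ℂ) (i : Fin n) : evL ξ q i = (q i).eval ξ := rfl

lemma evL_polySmul (ξ : ℂ) (r : Polynomial ℂ) (q : Fin n → Polynomial ℂ) :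
    evL ξ (r • q) = r.eval ξ • evL ξ q := by
  funext i
  simp [evL_apply]

lemma gker_eq (ξ : ℂ) :
    GKer A B ξ = Submodule.span ℂ
      {v | ∃ q ∈ LinearMap.ker (pP A B).mulVecLin, v = evL ξ q} := by
  unfold GKer
  congr 1
  ext v
  constructor
  · rintro ⟨p, h1, rfl⟩
    exact ⟨p, LinearMap.mem_ker.mpr (by rw [Matrix.mulVecLin_apply]; exact (sol_iff A B p).mp h1),
      rfl⟩
  · rintro ⟨q, hq, rfl⟩
    exact ⟨q, (sol_iff A B q).mpr (by simpa using LinearMap.mem_ker.mp hq), rfl⟩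

lemma gker_le_ker (ξ : ℂ) : GKer A B ξ ≤ LinearMap.ker (A - ξ • B).mulVecLin := by
  unfold GKer
  rw [Submodule.span_le]
  rintro v ⟨p, hp, rfl⟩
  exact LinearMap.mem_ker.mpr (by rw [Matrix.mulVecLin_apply]; exact hp ξ)

variable {m : ℕ} (bS : Module.Basis (Fin m) (Polynomial ℂ) (LinearMap.ker (pP A B).mulVecLin))

lemma gker_eq_span_range (ξ : ℂ) :
    GKer A B ξ = Submodule.span ℂ
      (Set.range fun i => evL ξ ((bS i : Fin n → Polynomial ℂ))) := by
  rw [gker_eq]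
  apply le_antisymm
  · rw [Submodule.span_le]
    rintro v ⟨q, hq, rfl⟩
    have hq' : q = ∑ i, bS.repr ⟨q, hq⟩ i • (bS i : Fin n → Polynomial ℂ) := by
      have := congrArg (Subtype.val) (bS.sum_repr ⟨q, hq⟩)
      simp only [Submodule.coe_sum, Submodule.coe_smul] at this
      exact this.symm
    rw [hq', map_sum]
    apply Submodule.sum_mem
    intro i _
    rw [evL_polySmul]
    exact Submodule.smul_mem _ _ (Submodule.subset_span ⟨i, rfl⟩)
  · rw [Submodule.span_le]
    rintro _ ⟨i, rfl⟩
    exact Submodule.subset_span ⟨bS i, (bS i).2, rfl⟩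

lemma li_evL (ξ : ℂ) :
    LinearIndependent ℂ (fun i => evL ξ ((bS i : Fin n → Polynomial ℂ))) := by
  rw [Fintype.linearIndependent_iff]
  intro c hc
  set qS : LinearMap.ker (pP A B).mulVecLin := ∑ i, (C (c i) : Polynomial ℂ) • bS i with hqS
  have hval : (qS : Fin n → Polynomial ℂ) = ∑ i, (C (c i)) • (bS i : Fin n → Polynomial ℂ) := by
    simp [hqS]
  have hev : evL ξ (qS : Fin n → Polynomial ℂ) = 0 := by
    rw [hval, map_sum]
    have : ∀ i, evL ξ ((C (c i)) • (bS i : Fin n → Polynomial ℂ))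
        = c i • evL ξ (bS i : Fin n → Polynomial ℂ) := by
      intro i; rw [evL_polySmul]; simp
    rw [Finset.sum_congr rfl fun i _ => this i]
    exact hc
  have hroot : ∀ j, ((qS : Fin n → Polynomial ℂ) j).IsRoot ξ := by
    intro j
    have := congrFun hev j
    simpa [evL_apply] using this
  set q' : Fin n → Polynomial ℂ := fun j => (qS : Fin n → Polynomial ℂ) j /ₘ (X - C ξ) with hq'
  have hfac : ∀ j, (X - C ξ) * q' j = (qS : Fin n → Polynomial ℂ) j := fun j =>
    (mul_divByMonic_eq_iff_isRoot).mpr (hroot j)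
  have hsmul : (X - C ξ) • q' = (qS : Fin n → Polynomial ℂ) := funext fun j => hfac j
  have hq'mem : q' ∈ LinearMap.ker (pP A B).mulVecLin := by
    have h0 : (X - C ξ) • (pP A B).mulVec q' = 0 := by
      rw [← Matrix.mulVec_smul, hsmul]
      have h2 := qS.2
      rw [LinearMap.mem_ker, Matrix.mulVecLin_apply] at h2
      exact h2
    rw [LinearMap.mem_ker, Matrix.mulVecLin_apply]
    funext j
    have := congrFun h0 j
    simp only [Pi.smul_apply, smul_eq_mul, Pi.zero_apply, mul_eq_zero] at this
    rcases this with h | h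
    · exact absurd h (Polynomial.X_sub_C_ne_zero ξ)
    · exact h
  have hqq : qS = (X - C ξ) • (⟨q', hq'mem⟩ : LinearMap.ker (pP A B).mulVecLin) :=
    Subtype.ext (by rw [← hsmul]; rfl)
  intro i
  have h1 : bS.repr qS i = C (c i) := by
    rw [hqS, map_sum, Finsupp.finset_sum_apply]
    have : ∀ j : Fin m, bS.repr ((C (c j)) • bS j) i
        = C (c j) * (Finsupp.single j (1 : Polynomial ℂ)) i := by
      intro j
      rw [_root_.map_smul, Module.Basis.repr_self]
      rfl
    rw [Finset.sum_congr rfl fun j _ => this j]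
    simp [Finsupp.single_apply]
  have h2 : bS.repr qS i
      = (X - C ξ) * bS.repr (⟨q', hq'mem⟩ : LinearMap.ker (pP A B).mulVecLin) i := by
    rw [hqq, _root_.map_smul]
    rfl
  rw [h1] at h2
  have := congrArg (fun r => Polynomial.eval ξ r) h2
  simpa using this

include bS in
lemma finrank_gker (ξ : ℂ) : Module.finrank ℂ (GKer A B ξ) = m := by
  rw [gker_eq_span_range A B bS ξ, finrank_span_eq_card (li_evL A B bS ξ)]
  simp


section Fside
open scoped Classical

lemma aF_mulVec (M : Matrix (Fin n) (Fin n) (Polynomial ℂ)) (v : Fin n → Polynomial ℂ) :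
    (M.map (algebraMap (Polynomial ℂ) (RatFunc ℂ))).mulVec
      (fun i => algebraMap (Polynomial ℂ) (RatFunc ℂ) (v i))
    = fun i => algebraMap (Polynomial ℂ) (RatFunc ℂ) (M.mulVec v i) := by
  funext i
  simp [Matrix.mulVec, dotProduct, map_sum, _root_.map_mul]

include bS in
lemma finrank_kerF_le :
    Module.finrank (RatFunc ℂ)
      (LinearMap.ker ((pP A B).map (algebraMap (Polynomial ℂ) (RatFunc ℂ))).mulVecLin) ≤ m := by
  have hφinj : Function.Injective (algebraMap (Polynomial ℂ) (RatFunc ℂ)) :=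
    IsFractionRing.injective (Polynomial ℂ) (RatFunc ℂ)
  set sp : Submodule (RatFunc ℂ) (Fin n → RatFunc ℂ) := Submodule.span (RatFunc ℂ)
    (Set.range fun i : Fin m => fun j => algebraMap (Polynomial ℂ) (RatFunc ℂ)
      ((bS i : Fin n → Polynomial ℂ) j)) with hsp
  have hker : LinearMap.ker ((pP A B).map (algebraMap (Polynomial ℂ) (RatFunc ℂ))).mulVecLin
      ≤ sp := by
    intro w hw
    obtain ⟨d, hd⟩ := IsLocalization.exist_integer_multiples_of_finite
      (nonZeroDivisors (Polynomial ℂ)) w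
    choose vR hvR using hd
    have hvR' : ∀ i, algebraMap (Polynomial ℂ) (RatFunc ℂ) (vR i)
        = algebraMap (Polynomial ℂ) (RatFunc ℂ) (d : Polynomial ℂ) * w i := by
      intro i
      rw [hvR i, Algebra.smul_def]
    have hvRker : vR ∈ LinearMap.ker (pP A B).mulVecLin := by
      rw [LinearMap.mem_ker, Matrix.mulVecLin_apply]
      have h2 : ((pP A B).map (algebraMap (Polynomial ℂ) (RatFunc ℂ))).mulVec
          (fun i => algebraMap (Polynomial ℂ) (RatFunc ℂ) (vR i)) = 0 := by
        have h1 : (fun i => algebraMap (Polynomial ℂ) (RatFunc ℂ) (vR i))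
            = algebraMap (Polynomial ℂ) (RatFunc ℂ) (d : Polynomial ℂ) • w := by
          funext i
          rw [hvR' i]
          rfl
        rw [h1, Matrix.mulVec_smul,
          show ((pP A B).map (algebraMap (Polynomial ℂ) (RatFunc ℂ))).mulVec w = 0 from by
            have := LinearMap.mem_ker.mp hw
            rwa [Matrix.mulVecLin_apply] at this]
        simp
      rw [aF_mulVec] at h2
      funext i
      apply hφinj
      have := congrFun h2 i
      simpa using this
    have hvRrepr : vR = ∑ i, bS.repr ⟨vR, hvRker⟩ i • (bS i : Fin n → Polynomial ℂ) := by
      have := congrArg (Subtype.val) (bS.sum_repr ⟨vR, hvRker⟩)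
      simp only [Submodule.coe_sum, Submodule.coe_smul] at this
      exact this.symm
    have hmem : (fun i => algebraMap (Polynomial ℂ) (RatFunc ℂ) (vR i)) ∈ sp := by
      rw [hvRrepr]
      have hexp : (fun i => algebraMap (Polynomial ℂ) (RatFunc ℂ)
            ((∑ k, bS.repr ⟨vR, hvRker⟩ k • (bS k : Fin n → Polynomial ℂ)) i))
          = ∑ k, algebraMap (Polynomial ℂ) (RatFunc ℂ) (bS.repr ⟨vR, hvRker⟩ k) •
              (fun j => algebraMap (Polynomial ℂ) (RatFunc ℂ)
                ((bS k : Fin n → Polynomial ℂ) j)) := by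
        funext i
        simp only [Finset.sum_apply, Pi.smul_apply, smul_eq_mul, map_sum, _root_.map_mul]
      rw [hexp]
      exact Submodule.sum_mem _ fun k _ =>
        Submodule.smul_mem _ _ (Submodule.subset_span ⟨k, rfl⟩)
    have hdne : algebraMap (Polynomial ℂ) (RatFunc ℂ) (d : Polynomial ℂ) ≠ 0 := by
      intro h
      exact nonZeroDivisors.coe_ne_zero d (hφinj (by simpa using h))
    have hw' : w = (algebraMap (Polynomial ℂ) (RatFunc ℂ) (d : Polynomial ℂ))⁻¹ •
        (fun i => algebraMap (Polynomial ℂ) (RatFunc ℂ) (vR i)) := by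
      funext i
      rw [Pi.smul_apply, smul_eq_mul, hvR' i, ← mul_assoc, inv_mul_cancel₀ hdne, one_mul]
    rw [hw']
    exact Submodule.smul_mem _ _ hmem
  refine le_trans (Submodule.finrank_mono hker) (le_trans (finrank_span_le_card _) ?_)
  rw [Set.toFinset_range]
  exact le_trans Finset.card_image_le (by simp)

include bS in
lemma exists_generic :
    ∃ ξ : ℂ, Module.finrank ℂ (LinearMap.ker (A - ξ • B).mulVecLin) ≤ m := by
  classical
  set φ := algebraMap (Polynomial ℂ) (RatFunc ℂ) with hφdef
  set PF : Matrix (Fin n) (Fin n) (RatFunc ℂ) := (pP A B).map φ with hPFdef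
  set kF := Module.finrank (RatFunc ℂ) (LinearMap.ker PF.mulVecLin) with hkF
  have hkFm : kF ≤ m := finrank_kerF_le A B bS
  have hrnF : Module.finrank (RatFunc ℂ) (LinearMap.range PF.mulVecLin) + kF = n := by
    rw [hkF, LinearMap.finrank_range_add_finrank_ker PF.mulVecLin, Module.finrank_fin_fun]
  set cols : Set (Fin n → RatFunc ℂ) := Set.range PFᵀ with hcols
  have hrangeF : LinearMap.range PF.mulVecLin = Submodule.span (RatFunc ℂ) cols :=
    Matrix.range_mulVecLin PF
  obtain ⟨t, hts, htspan, htli⟩ := exists_linearIndependent (RatFunc ℂ) cols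
  have htfin : t.Finite := htli.setFinite
  have := htfin.fintype
  have htcard : t.toFinset.card + kF = n := by
    rw [← finrank_span_set_eq_card htli, htspan, ← hrangeF]
    exact hrnF
  -- the standard basis vectors over RatFunc ℂ
  set stdF : Fin n → (Fin n → RatFunc ℂ) := fun i => Pi.single i 1 with hstdF
  have hstdspan : Submodule.span (RatFunc ℂ) (Set.range stdF) = ⊤ := by
    have h := (Pi.basisFun (RatFunc ℂ) (Fin n)).span_eq
    have heq : ⇑(Pi.basisFun (RatFunc ℂ) (Fin n)) = stdF := by
      funext i
      rw [Pi.basisFun_apply, hstdF]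
    rwa [heq] at h
  obtain ⟨b, hbT, htb, hTb, hbli⟩ :=
    exists_linearIndepOn_id_extension htli (Set.subset_union_left (t := Set.range stdF))
  have hbli : LinearIndependent (RatFunc ℂ) ((↑) : b → (Fin n → RatFunc ℂ)) := hbli
  have hbfin : b.Finite := hbli.setFinite
  have := hbfin.fintype
  have hspanb : Submodule.span (RatFunc ℂ) b = ⊤ := by
    rw [eq_top_iff, ← hstdspan]
    apply Submodule.span_le.mpr
    intro x hx
    exact hTb (Set.mem_union_right _ hx)
  have hbcard : b.toFinset.card = n := by
    rw [← finrank_span_set_eq_card hbli, hspanb, finrank_top, Module.finrank_fin_fun]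
  have hbcard' : Fintype.card b = n := by rw [← Set.toFinset_card, hbcard]
  set σ : Fin n ≃ b := (Fintype.equivFinOfCardEq hbcard').symm with hσ
  -- choose polynomial preimages of the basis vectors
  have hpre : ∀ x : b, ∃ q : Fin n → Polynomial ℂ,
      (fun j => φ (q j)) = (x : Fin n → RatFunc ℂ) ∧
      ((x : Fin n → RatFunc ℂ) ∈ t → ∃ jc : Fin n, q = (pP A B)ᵀ jc) := by
    rintro ⟨x, hx⟩
    by_cases hxt : x ∈ t
    · obtain ⟨jc, hjc⟩ := hts hxt
      refine ⟨(pP A B)ᵀ jc, ?_, fun _ => ⟨jc, rfl⟩⟩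
      funext i
      show φ ((pP A B)ᵀ jc i) = x i
      rw [← hjc]
      rfl
    · rcases hbT hx with hx1 | hx2
      · exact absurd hx1 hxt
      · obtain ⟨i, hi⟩ := hx2
        subst hi
        refine ⟨Pi.single i 1, ?_, fun hxt' => absurd hxt' hxt⟩
        funext j
        rcases eq_or_ne j i with rfl | hji
        · simp [hstdF]
        · simp [hstdF, Pi.single_apply, hji]
  choose pre hpre1 hpre2 using hpre
  set Q : Matrix (Fin n) (Fin n) (Polynomial ℂ) := Matrix.of fun i l => pre (σ l) i with hQ
  have hQF : Q.map φ = Matrix.of fun i l => (σ l : Fin n → RatFunc ℂ) i := by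
    funext i l
    have := congrFun (hpre1 (σ l)) i
    simpa [hQ, Matrix.map_apply] using this
  have hQdet : Q.det ≠ 0 := by
    intro h0
    have hdetF : (Q.map φ).det = 0 := by
      rw [← RingHom.mapMatrix_apply, ← RingHom.map_det, h0, map_zero]
    have hliQ : LinearIndependent (RatFunc ℂ) (fun l => (Q.map φ)ᵀ l) := by
      rw [hQF]
      have : (fun l => (Matrix.of fun i l' => (σ l' : Fin n → RatFunc ℂ) i)ᵀ l)
          = fun l => (σ l : Fin n → RatFunc ℂ) := by
        funext l
        rfl
      rw [this]
      exact hbli.comp σ σ.injective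
    have := Matrix.linearIndependent_cols_iff_isUnit.mp hliQ
    rw [Matrix.isUnit_iff_isUnit_det] at this
    rw [hdetF] at this
    simp at this
  obtain ⟨ξ, hξ⟩ : ∃ ξ : ℂ, (Q.det).eval ξ ≠ 0 := by
    by_contra hcon
    push_neg at hcon
    exact hQdet (Polynomial.zero_of_eval_zero _ hcon)
  refine ⟨ξ, ?_⟩
  -- the evaluated matrix
  set Qc : Matrix (Fin n) (Fin n) ℂ := Q.map (Polynomial.evalRingHom ξ) with hQc
  have hQcdet : Qc.det ≠ 0 := by
    rw [hQc, ← RingHom.mapMatrix_apply, ← RingHom.map_det]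
    simpa using hξ
  have hlic : LinearIndependent ℂ (fun l => Qcᵀ l) :=
    Matrix.linearIndependent_cols_iff_isUnit.mpr
      ((Matrix.isUnit_iff_isUnit_det Qc).mpr (isUnit_iff_ne_zero.mpr hQcdet))
  -- the columns coming from t give independent columns of A - ξ B
  set jmap : t → Fin n := fun x => σ.symm ⟨(x : Fin n → RatFunc ℂ), htb x.2⟩ with hjmap
  have hjinj : Function.Injective jmap := by
    intro x y hxy
    rw [hjmap] at hxy
    have h2 := σ.symm.injective hxy
    have h3 := congrArg (fun z : ↥b => (z : Fin n → RatFunc ℂ)) h2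
    exact Subtype.ext h3
  have hfamli : LinearIndependent ℂ (fun x : t => Qcᵀ (jmap x)) := hlic.comp jmap hjinj
  have hfamcol : ∀ x : t, ∃ jc : Fin n, Qcᵀ (jmap x) = (A - ξ • B)ᵀ jc := by
    intro x
    have hσx : (σ (jmap x) : Fin n → RatFunc ℂ) = (x : Fin n → RatFunc ℂ) := by
      rw [hjmap]
      simp
    obtain ⟨jc, hjc⟩ := hpre2 (σ (jmap x)) (by rw [hσx]; exact x.2)
    refine ⟨jc, ?_⟩
    funext i
    have hq : Q i (jmap x) = (pP A B)ᵀ jc i := by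
      rw [hQ]
      simp only [Matrix.of_apply]
      rw [hjc]
    simp only [hQc, Matrix.transpose_apply, Matrix.map_apply, hq]
    show ((pP A B)ᵀ jc i).eval ξ = (A - ξ • B) i jc
    rw [Matrix.transpose_apply, pP_apply]
    simp only [eval_sub, eval_mul, eval_C, eval_X, Matrix.sub_apply, Matrix.smul_apply,
      smul_eq_mul]
  -- now estimate the rank
  have hrank_ge : t.toFinset.card ≤ (A - ξ • B).rank := by
    rw [Matrix.rank_eq_finrank_span_cols]
    have h1 : Submodule.span ℂ (Set.range fun x : t => Qcᵀ (jmap x))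
        ≤ Submodule.span ℂ (Set.range (A - ξ • B)ᵀ) := by
      apply Submodule.span_mono
      rintro _ ⟨x, rfl⟩
      obtain ⟨jc, hjc⟩ := hfamcol x
      exact ⟨jc, hjc.symm⟩
    have h2 := Submodule.finrank_mono h1
    rw [finrank_span_eq_card hfamli] at h2
    rwa [Set.toFinset_card]
  have hrnC : (A - ξ • B).rank + Module.finrank ℂ (LinearMap.ker (A - ξ • B).mulVecLin) = n := by
    have h := LinearMap.finrank_range_add_finrank_ker (A - ξ • B).mulVecLin
    rw [Module.finrank_fin_fun] at h
    exact h
  have hrank_le : (A - ξ • B).rank ≤ n := Matrix.rank_le_card_width _ |>.trans (by simp)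
  omega

end Fside


lemma redmin_eq_iSup : RedMin A B = ⨆ ζ : ℂ, GKer A B ζ := by
  rw [RedMin, Submodule.span_iUnion]
  exact iSup_congr fun ζ => Submodule.span_eq _

lemma gker_le_redmin (ζ : ℂ) : GKer A B ζ ≤ RedMin A B := by
  rw [redmin_eq_iSup]
  exact le_iSup _ ζ

lemma pencil_split (ξ ζ : ℂ) : A - ξ • B = (A - ζ • B) + (ζ - ξ) • B := by
  rw [sub_smul]
  abel

lemma mulVec_eval_eq {p : Fin n → Polynomial ℂ}
    (hp : ∀ t : ℂ, (A - t • B).mulVec (fun i => (p i).eval t) = 0) (ξ ζ : ℂ) :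
    (A - ξ • B).mulVec (fun i => (p i).eval ζ)
      = (ζ - ξ) • B.mulVec (fun i => (p i).eval ζ) := by
  rw [pencil_split A B ξ ζ, Matrix.add_mulVec, hp ζ, Matrix.smul_mulVec, zero_add]

lemma eval_constMul (p : Fin n → Polynomial ℂ) (s : ℂ) (i : Fin n) :
    (((B.map Polynomial.C).mulVec p) i).eval s = B.mulVec (fun j => (p j).eval s) i := by
  simp [Matrix.mulVec, dotProduct, Polynomial.eval_finset_sum]

lemma dual_expand (φ : (Fin n → ℂ) →ₗ[ℂ] ℂ) (v : Fin n → ℂ) :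
    φ v = ∑ i, v i * φ (Pi.single i 1) := by
  have hv : v = ∑ i : Fin n, v i • (Pi.single i (1 : ℂ) : Fin n → ℂ) := by
    funext j
    rw [Finset.sum_apply]
    simp [Pi.single_apply, Finset.sum_ite_eq]
  conv_lhs => rw [hv]
  rw [map_sum]
  refine Finset.sum_congr rfl fun i _ => ?_
  rw [_root_.map_smul, smul_eq_mul]

lemma Bp_mem (ξ : ℂ) {p : Fin n → Polynomial ℂ}
    (hp : ∀ t : ℂ, (A - t • B).mulVec (fun i => (p i).eval t) = 0) (ζ : ℂ) :
    B.mulVec (fun i => (p i).eval ζ)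
      ∈ Submodule.map (A - ξ • B).mulVecLin (RedMin A B) := by
  by_contra hmem
  set Y := Submodule.map (A - ξ • B).mulVecLin (RedMin A B) with hY
  set v := B.mulVec (fun i => (p i).eval ζ) with hv
  have hq : Y.mkQ v ≠ 0 := by
    intro h0
    exact hmem ((Submodule.Quotient.mk_eq_zero Y).mp h0)
  obtain ⟨φ0, hφ0⟩ : ∃ φ0 : Module.Dual ℂ ((Fin n → ℂ) ⧸ Y), φ0 (Y.mkQ v) ≠ 0 := by
    by_contra hcon
    push_neg at hcon
    exact hq ((Module.forall_dual_apply_eq_zero_iff ℂ _).mp hcon)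
  set φ : (Fin n → ℂ) →ₗ[ℂ] ℂ := φ0.comp Y.mkQ with hφ
  have hφY : ∀ y ∈ Y, φ y = 0 := by
    intro y hy
    have : Y.mkQ y = 0 := (Submodule.Quotient.mk_eq_zero Y).mpr hy
    rw [hφ, LinearMap.comp_apply, this, map_zero]
  have hmemW : ∀ s : ℂ, (fun i => (p i).eval s) ∈ RedMin A B := by
    intro s
    apply gker_le_redmin A B s
    exact Submodule.subset_span ⟨p, hp, rfl⟩
  have hzero : ∀ s : ℂ, s ≠ ξ → φ (B.mulVec (fun i => (p i).eval s)) = 0 := by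
    intro s hs
    have h1 : (A - ξ • B).mulVec (fun i => (p i).eval s)
        = (s - ξ) • B.mulVec (fun i => (p i).eval s) := mulVec_eval_eq A B hp ξ s
    have h2 : (A - ξ • B).mulVec (fun i => (p i).eval s) ∈ Y :=
      ⟨fun i => (p i).eval s, hmemW s, rfl⟩
    have h3 : B.mulVec (fun i => (p i).eval s)
        = (s - ξ)⁻¹ • (A - ξ • B).mulVec (fun i => (p i).eval s) := by
      rw [h1, smul_smul, inv_mul_cancel₀ (sub_ne_zero.mpr hs), one_smul]
    rw [h3, _root_.map_smul, hφY _ h2, smul_zero]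
  set h : Polynomial ℂ :=
    ∑ i, Polynomial.C (φ (Pi.single i 1)) * ((B.map Polynomial.C).mulVec p) i with hh
  have heval : ∀ s : ℂ, h.eval s = φ (B.mulVec (fun i => (p i).eval s)) := by
    intro s
    rw [hh, Polynomial.eval_finset_sum]
    rw [dual_expand φ (B.mulVec (fun i => (p i).eval s))]
    congr 1
    funext i
    rw [Polynomial.eval_mul, Polynomial.eval_C, eval_constMul, mul_comm]
  have hzero' : h = 0 := by
    by_contra hne
    have hfin := Polynomial.finite_setOf_isRoot hne
    have hsub : ({ξ}ᶜ : Set ℂ) ⊆ {x | h.IsRoot x} := by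
      intro s hs
      have : s ≠ ξ := hs
      simp only [Set.mem_setOf_eq, Polynomial.IsRoot]
      rw [heval s, hzero s this]
    exact (Set.Finite.infinite_compl (Set.finite_singleton ξ)) (hfin.subset hsub)
  have : φ v = 0 := by
    rw [hv, ← heval ζ, hzero', Polynomial.eval_zero]
  exact hφ0 (by rw [← this]; rfl)

lemma map_redmin (ξ : ℂ) :
    Submodule.map (A - ξ • B).mulVecLin (RedMin A B)
      = Submodule.map B.mulVecLin (RedMin A B) := by
  apply le_antisymm
  · conv_lhs => rw [redmin_eq_iSup, Submodule.map_iSup]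
    apply iSup_le
    intro ζ
    rw [GKer, Submodule.map_span, Submodule.span_le]
    rintro _ ⟨_, ⟨p, hp, rfl⟩, rfl⟩
    rw [Matrix.mulVecLin_apply, mulVec_eval_eq A B hp ξ ζ]
    apply Submodule.smul_mem
    exact ⟨fun i => (p i).eval ζ, gker_le_redmin A B ζ (Submodule.subset_span ⟨p, hp, rfl⟩), rfl⟩
  · conv_lhs => rw [redmin_eq_iSup, Submodule.map_iSup]
    apply iSup_le
    intro ζ
    rw [GKer, Submodule.map_span, Submodule.span_le]
    rintro _ ⟨_, ⟨p, hp, rfl⟩, rfl⟩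
    rw [Matrix.mulVecLin_apply]
    exact Bp_mem A B ξ hp ζ

lemma finrank_ker_inter (ξ : ℂ) :
    Module.finrank ℂ ↥(LinearMap.ker (A - ξ • B).mulVecLin ⊓ RedMin A B)
      + Module.finrank ℂ ↥(Submodule.map B.mulVecLin (RedMin A B))
      = Module.finrank ℂ ↥(RedMin A B) := by
  have h1 := LinearMap.finrank_range_add_finrank_ker
    ((A - ξ • B).mulVecLin.domRestrict (RedMin A B))
  rw [LinearMap.range_domRestrict, LinearMap.ker_domRestrict] at h1
  rw [map_redmin A B ξ] at h1
  have h2 : Submodule.comap (RedMin A B).subtype (LinearMap.ker (A - ξ • B).mulVecLin)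
      = Submodule.comap (RedMin A B).subtype
          (LinearMap.ker (A - ξ • B).mulVecLin ⊓ RedMin A B) := by
    ext x
    simp only [Submodule.mem_comap, Submodule.mem_inf, Submodule.coe_subtype]
    exact ⟨fun hx => ⟨hx, x.2⟩, fun hx => hx.1⟩
  rw [h2] at h1
  have h3 : Module.finrank ℂ ↥(Submodule.comap (RedMin A B).subtype
        (LinearMap.ker (A - ξ • B).mulVecLin ⊓ RedMin A B))
      = Module.finrank ℂ ↥(LinearMap.ker (A - ξ • B).mulVecLin ⊓ RedMin A B) :=
    (Submodule.comapSubtypeEquivOfLe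
      (inf_le_right : LinearMap.ker (A - ξ • B).mulVecLin ⊓ RedMin A B ≤ RedMin A B)).finrank_eq
  rw [h3] at h1
  omega


lemma exists_m : ∃ m : ℕ, (∀ ξ : ℂ, Module.finrank ℂ (GKer A B ξ) = m) ∧
    (∃ ξg : ℂ, Module.finrank ℂ (LinearMap.ker (A - ξg • B).mulVecLin) ≤ m) := by
  obtain ⟨m, bS'⟩ := Submodule.basisOfPid (Pi.basisFun (Polynomial ℂ) (Fin n))
    (LinearMap.ker (pP A B).mulVecLin)
  exact ⟨m, fun ξ => finrank_gker A B bS' ξ, exists_generic A B bS'⟩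

end PencilAux

open PencilAux

/-- **Characterizations of eigenvalues of a (possibly singular) pencil.** For an
`n × n` pencil `A − λB` and `λ₀ ∈ ℂ`, the following are equivalent:
(b) `rank(A − λ₀B) < nrank(A − λB)`;
(c) `dim GKer(A − λ₀B) < dim ker(A − λ₀B)`;
(d) there is `v` with `(A − λ₀B)v = 0` and `v ∉ GKer(A − λ₀B)`;
(e) there is `v` with `(A − λ₀B)v = 0` and `v ∉ R(A,B)`. -/
theorem pencil_eigenvalue_tfae {n : ℕ} (A B : Matrix (Fin n) (Fin n) ℂ) (l₀ : ℂ) :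
    List.TFAE
      [ (A - l₀ • B).rank < nrank A B,
        Module.finrank ℂ (GKer A B l₀) <
          Module.finrank ℂ (LinearMap.ker (A - l₀ • B).mulVecLin),
        ∃ v : Fin n → ℂ, (A - l₀ • B).mulVec v = 0 ∧ v ∉ GKer A B l₀,
        ∃ v : Fin n → ℂ, (A - l₀ • B).mulVec v = 0 ∧ v ∉ RedMin A B ] := by
  classical
  obtain ⟨m, hGK, ξg, hξg⟩ := exists_m A B
  have hle : ∀ ξ : ℂ, GKer A B ξ ≤ LinearMap.ker (A - ξ • B).mulVecLin := gker_le_ker A B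
  have hker_ge : ∀ ξ : ℂ, m ≤ Module.finrank ℂ (LinearMap.ker (A - ξ • B).mulVecLin) := by
    intro ξ
    rw [← hGK ξ]
    exact Submodule.finrank_mono (hle ξ)
  have hkerg : Module.finrank ℂ (LinearMap.ker (A - ξg • B).mulVecLin) = m :=
    le_antisymm hξg (hker_ge ξg)
  have hrn : ∀ ξ : ℂ, (A - ξ • B).rank
      + Module.finrank ℂ (LinearMap.ker (A - ξ • B).mulVecLin) = n := by
    intro ξ
    have h := LinearMap.finrank_range_add_finrank_ker (A - ξ • B).mulVecLin
    rw [Module.finrank_fin_fun] at h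
    exact h
  have hbdd : BddAbove (Set.range fun ξ : ℂ => (A - ξ • B).rank) := by
    refine ⟨n, ?_⟩
    rintro _ ⟨ξ, rfl⟩
    have := Matrix.rank_le_card_width (A - ξ • B)
    simpa using this
  have hnr : nrank A B = n - m := by
    apply le_antisymm
    · apply ciSup_le
      intro ξ
      have h1 := hrn ξ
      have h2 := hker_ge ξ
      omega
    · have h1 : (A - ξg • B).rank = n - m := by
        have := hrn ξg
        omega
      calc n - m = (A - ξg • B).rank := h1.symm
        _ ≤ nrank A B := le_ciSup hbdd ξg
  tfae_have 1 ↔ 2 := by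
    rw [hnr, hGK l₀]
    have h1 := hrn l₀
    have h2 := hker_ge l₀
    constructor <;> intro <;> omega
  tfae_have 2 → 3 := by
    intro h2
    by_contra hcon
    push_neg at hcon
    have hKG : LinearMap.ker (A - l₀ • B).mulVecLin ≤ GKer A B l₀ := by
      intro v hv
      exact hcon v (by rwa [LinearMap.mem_ker, Matrix.mulVecLin_apply] at hv)
    rw [le_antisymm hKG (hle l₀)] at h2
    exact lt_irrefl _ h2
  tfae_have 3 → 2 := by
    rintro ⟨v, hv1, hv2⟩
    have hvK : v ∈ LinearMap.ker (A - l₀ • B).mulVecLin :=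
      LinearMap.mem_ker.mpr (by rw [Matrix.mulVecLin_apply]; exact hv1)
    have hlt : GKer A B l₀ < LinearMap.ker (A - l₀ • B).mulVecLin :=
      lt_of_le_of_ne (hle l₀) (fun heq => hv2 (heq ▸ hvK))
    exact Submodule.finrank_lt_finrank_of_lt hlt
  tfae_have 3 → 4 := by
    rintro ⟨v, hv1, hv2⟩
    refine ⟨v, hv1, fun hvW => hv2 ?_⟩
    have hvK : v ∈ LinearMap.ker (A - l₀ • B).mulVecLin :=
      LinearMap.mem_ker.mpr (by rw [Matrix.mulVecLin_apply]; exact hv1)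
    have hi1 := finrank_ker_inter A B l₀
    have hi2 := finrank_ker_inter A B ξg
    have hle2 : Module.finrank ℂ
        ↥(LinearMap.ker (A - ξg • B).mulVecLin ⊓ RedMin A B) ≤ m := by
      rw [← hkerg]
      exact Submodule.finrank_mono inf_le_left
    have hGle : GKer A B l₀ ≤ LinearMap.ker (A - l₀ • B).mulVecLin ⊓ RedMin A B :=
      le_inf (hle l₀) (gker_le_redmin A B l₀)
    have heq : GKer A B l₀ = LinearMap.ker (A - l₀ • B).mulVecLin ⊓ RedMin A B :=
      Submodule.eq_of_le_of_finrank_le hGle (by rw [hGK l₀]; omega)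
    rw [heq]
    exact ⟨hvK, hvW⟩
  tfae_have 4 → 3 := by
    rintro ⟨v, hv1, hv2⟩
    exact ⟨v, hv1, fun hG => hv2 (gker_le_redmin A B l₀ hG)⟩
  tfae_finish
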